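/- For every r ∈ (0,1), σ ∈ (0,1), and δ ∈ (0, π/4): (1/(2π)) ∫_0^{2π} cos(η − δ)/(1 + σ r sin(η + δ)) dη = −(1/2) sin(2δ) P(σ r), where P(x) = −(1/π)∫_0^{2π} sin ϑ/(1 + x sin ϑ) dϑ. In particular the integral is strictly negative for r > 0. -/

import Mathlib

open Real intervalIntegral

noncomputable def Pfun (x : ℝ) : ℝ :=
  -(1 / Real.pi) * ∫ ϑ in (0:ℝ)..(2 * Real.pi), Real.sin ϑ / (1 + x * Real.sin ϑ)

theorem averaged_integral_identity (r σ δ : ℝ) (hr : r ∈ Set.Ioo (0:ℝ) 1)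
    (hσ : σ ∈ Set.Ioo (0:ℝ) 1) (hδ : δ ∈ Set.Ioo 0 (Real.pi / 4)) :
    (1 / (2 * Real.pi)) * ∫ η in (0:ℝ)..(2 * Real.pi),
        Real.cos (η - δ) / (1 + σ * r * Real.sin (η + δ))
      = -(1 / 2) * Real.sin (2 * δ) * Pfun (σ * r)
    ∧ (1 / (2 * Real.pi)) * (∫ η in (0:ℝ)..(2 * Real.pi),
        Real.cos (η - δ) / (1 + σ * r * Real.sin (η + δ))) < 0 := by
  obtain ⟨hr0, hr1⟩ := hr
  obtain ⟨hσ0, hσ1⟩ := hσ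
  obtain ⟨hδ0, hδ1⟩ := hδ
  set x := σ * r with hxdef
  have hx0 : 0 < x := mul_pos hσ0 hr0
  have hx1 : x < 1 := by nlinarith
  have hpos : ∀ t : ℝ, 0 < 1 + x * Real.sin t := fun t => by
    nlinarith [Real.neg_one_le_sin t, Real.sin_le_one t]
  have hneg : ∀ t : ℝ, 0 < 1 - x * Real.sin t := fun t => by
    nlinarith [Real.neg_one_le_sin t, Real.sin_le_one t]
  have hne : ∀ t : ℝ, 1 + x * Real.sin t ≠ 0 := fun t => ne_of_gt (hpos t)
  have hcontD : Continuous fun t : ℝ => 1 + x * Real.sin t := by continuity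
  have hcont : ∀ g : ℝ → ℝ, Continuous g →
      Continuous fun t => g t / (1 + x * Real.sin t) := fun g hg =>
    hg.div hcontD hne
  have hπ : (0:ℝ) < Real.pi := Real.pi_pos
  -- the cosine integral vanishes
  have hScos : (∫ ϑ in (0:ℝ)..(2 * Real.pi), Real.cos ϑ / (1 + x * Real.sin ϑ)) = 0 := by
    have hderiv : ∀ t ∈ Set.uIcc (0:ℝ) (2 * Real.pi),
        HasDerivAt (fun s => Real.log (1 + x * Real.sin s) / x)
          (Real.cos t / (1 + x * Real.sin t)) t := by
      intro t _
      have h1 : HasDerivAt (fun s : ℝ => 1 + x * Real.sin s) (x * Real.cos t) t :=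
        ((Real.hasDerivAt_sin t).const_mul x).const_add 1
      have h2 := (h1.log (hne t)).div_const x
      refine h2.congr_deriv ?_
      rw [mul_div_assoc, mul_div_cancel_left₀ _ (ne_of_gt hx0)]
    rw [intervalIntegral.integral_eq_sub_of_hasDerivAt hderiv
      ((hcont _ Real.continuous_cos).intervalIntegrable _ _)]
    simp [Real.sin_two_pi]
  -- the sine integral is negative
  have hSsin : (∫ ϑ in (0:ℝ)..(2 * Real.pi), Real.sin ϑ / (1 + x * Real.sin ϑ)) < 0 := by
    set f : ℝ → ℝ := fun t => Real.sin t / (1 + x * Real.sin t) with hf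
    have hfc : Continuous f := hcont _ Real.continuous_sin
    have hsplit : (∫ ϑ in (0:ℝ)..Real.pi, f ϑ) + ∫ ϑ in Real.pi..(2 * Real.pi), f ϑ
        = ∫ ϑ in (0:ℝ)..(2 * Real.pi), f ϑ :=
      intervalIntegral.integral_add_adjacent_intervals
        (hfc.intervalIntegrable _ _) (hfc.intervalIntegrable _ _)
    have hshift : (∫ ϑ in Real.pi..(2 * Real.pi), f ϑ)
        = ∫ t in (0:ℝ)..Real.pi, f (t + Real.pi) := by
      rw [intervalIntegral.integral_comp_add_right f Real.pi]
      norm_num [two_mul]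
    have hc2 : Continuous (fun t : ℝ => f (t + Real.pi)) :=
      hfc.comp (continuous_id.add continuous_const)
    have hcomb : (∫ ϑ in (0:ℝ)..(2 * Real.pi), f ϑ)
        = ∫ t in (0:ℝ)..Real.pi, (f t + f (t + Real.pi)) := by
      rw [← hsplit, hshift, intervalIntegral.integral_add (hfc.intervalIntegrable _ _)
        (hc2.intervalIntegrable _ _)]
    rw [hcomb]
    have : (0:ℝ) < ∫ t in (0:ℝ)..Real.pi, -(f t + f (t + Real.pi)) := by
      apply intervalIntegral.intervalIntegral_pos_of_pos_on
      · exact ((hfc.add hc2).neg).intervalIntegrable _ _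
      · intro t ht
        have hs : 0 < Real.sin t := Real.sin_pos_of_pos_of_lt_pi ht.1 ht.2
        have h1 : f (t + Real.pi) = -Real.sin t / (1 - x * Real.sin t) := by
          simp [hf, Real.sin_add]
          ring_nf
        have h2 : f t < Real.sin t / (1 - x * Real.sin t) := by
          rw [hf]
          apply div_lt_div_of_pos_left hs (hneg t)
          nlinarith
        rw [h1]
        have : f t - Real.sin t / (1 - x * Real.sin t) < 0 := by linarith
        have hE : -Real.sin t / (1 - x * Real.sin t)
            = -(Real.sin t / (1 - x * Real.sin t)) := by ring
        rw [hE]; linarith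
      · exact hπ
    rw [intervalIntegral.integral_neg] at this
    linarith
  -- substitution + splitting
  have hmain : (∫ η in (0:ℝ)..(2 * Real.pi),
      Real.cos (η - δ) / (1 + x * Real.sin (η + δ)))
      = Real.sin (2 * δ) * ∫ ϑ in (0:ℝ)..(2 * Real.pi), Real.sin ϑ / (1 + x * Real.sin ϑ) := by
    set g : ℝ → ℝ := fun ϑ => Real.cos (ϑ - 2 * δ) / (1 + x * Real.sin ϑ) with hg
    have hgc : Continuous g := hcont _ (by continuity)
    have hper : Function.Periodic g (2 * Real.pi) := by
      intro t
      have h1 : Real.cos (t + 2 * Real.pi - 2 * δ) = Real.cos (t - 2 * δ) := by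
        rw [show t + 2 * Real.pi - 2 * δ = (t - 2 * δ) + 2 * Real.pi by ring,
          Real.cos_add_two_pi]
      simp [hg, h1, Real.sin_add_two_pi]
    have hsub : (∫ η in (0:ℝ)..(2 * Real.pi),
        Real.cos (η - δ) / (1 + x * Real.sin (η + δ)))
        = ∫ ϑ in (0:ℝ)..(2 * Real.pi), g ϑ := by
      have h1 : (∫ η in (0:ℝ)..(2 * Real.pi), Real.cos (η - δ) / (1 + x * Real.sin (η + δ)))
          = ∫ η in (0:ℝ)..(2 * Real.pi), g (η + δ) := by
        apply intervalIntegral.integral_congr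
        intro t _
        simp only [hg]
        congr 2
        ring
      rw [h1, intervalIntegral.integral_comp_add_right g δ]
      have := hper.intervalIntegral_add_eq δ 0
      rw [zero_add] at this
      rw [show (0:ℝ) + δ = δ by ring, show 2 * Real.pi + δ = δ + 2 * Real.pi by ring]
      exact this
    rw [hsub]
    have hsplit : (∫ ϑ in (0:ℝ)..(2 * Real.pi), g ϑ)
        = Real.cos (2 * δ) * (∫ ϑ in (0:ℝ)..(2 * Real.pi), Real.cos ϑ / (1 + x * Real.sin ϑ))
          + Real.sin (2 * δ) * ∫ ϑ in (0:ℝ)..(2 * Real.pi), Real.sin ϑ / (1 + x * Real.sin ϑ) := by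
      rw [← intervalIntegral.integral_const_mul, ← intervalIntegral.integral_const_mul,
        ← intervalIntegral.integral_add
          (f := fun t => Real.cos (2 * δ) * (Real.cos t / (1 + x * Real.sin t)))
          (g := fun t => Real.sin (2 * δ) * (Real.sin t / (1 + x * Real.sin t)))
          ((continuous_const.mul (hcont _ Real.continuous_cos)).intervalIntegrable _ _)
          ((continuous_const.mul (hcont _ Real.continuous_sin)).intervalIntegrable _ _)]
      apply intervalIntegral.integral_congr
      intro t _
      simp only [hg]
      rw [Real.cos_sub]
      ring
    rw [hsplit, hScos]
    ring
  have hsin2δ : 0 < Real.sin (2 * δ) := by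
    apply Real.sin_pos_of_pos_of_lt_pi (by linarith)
    linarith [Real.pi_pos]
  constructor
  · rw [hmain, Pfun]
    field_simp
    congr 1
    funext ϑ
    ring
  · rw [hmain]
    have h1 : Real.sin (2 * δ) * (∫ ϑ in (0:ℝ)..(2 * Real.pi),
        Real.sin ϑ / (1 + x * Real.sin ϑ)) < 0 := mul_neg_of_pos_of_neg hsin2δ hSsin
    have h2 : (0:ℝ) < 1 / (2 * Real.pi) := by positivity
    exact mul_neg_of_pos_of_neg h2 h1
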